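/- Let s, k, n, m be integers with s ≥ 0, k ≥ s+1, n > k+s and m > 2s+1. Let ℱ ⊆ {A ∈ C([n], k) : |A ∩ [m]| ≥ s+1} and 𝒢 ⊆ {B ∈ C([n], s+1) : |B ∩ [m]| ≥ s+1} be cross-intersecting families. Then |ℱ| + |𝒢| ≤ C(n, k) − Σ_{i=0}^{s} C(m, i)·C(n−m, k−i). -/

import Mathlib

open Finset

theorem restricted_universe_bound_small
    (s k n m : ℕ) (hk : s + 1 ≤ k) (hn : k + s < n) (hm : 2 * s + 1 < m)
    (F G : Finset (Finset ℕ))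
    (hF : ∀ A ∈ F, A ∈ powersetCard k (Icc 1 n) ∧ s + 1 ≤ (A ∩ Icc 1 m).card)
    (hG : ∀ B ∈ G, B ∈ powersetCard (s + 1) (Icc 1 n) ∧ s + 1 ≤ (B ∩ Icc 1 m).card)
    (hcross : ∀ A ∈ F, ∀ B ∈ G, (A ∩ B).Nonempty) :
    F.card + G.card ≤
      Nat.choose n k
        - ∑ i ∈ Finset.range (s + 1),
            Nat.choose m i * Nat.choose (n - m) (k - i) := by
  classical
  set P : Finset (Finset ℕ) := powersetCard k (Icc 1 n) with hPdef
  set U : Finset (Finset ℕ) := P.filter (fun A => s + 1 ≤ (A ∩ Icc 1 m).card) with hUdef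
  set W : Finset (Finset ℕ) := P.filter (fun A => ¬ s + 1 ≤ (A ∩ Icc 1 m).card) with hWdef
  -- Step A: counting the complement
  have hWi : ∀ i ∈ Finset.range (s+1),
      Nat.choose m i * Nat.choose (n - m) (k - i)
        ≤ (P.filter (fun A => (A ∩ Icc 1 m).card = i)).card := by
    intro i hi
    rw [Finset.mem_range] at hi
    have hkey : ∀ X Q : Finset ℕ, X ∈ powersetCard i (Icc 1 m) →
        Q ∈ powersetCard (k - i) (Icc (m+1) n) →
        (X ∪ Q) ∈ P.filter (fun A => (A ∩ Icc 1 m).card = i)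
          ∧ (X ∪ Q) ∩ Icc 1 m = X := by
      intro X Q hX hQ
      rw [Finset.mem_powersetCard] at hX hQ
      obtain ⟨hXs, hXc⟩ := hX
      obtain ⟨hQs, hQc⟩ := hQ
      have hQne : Q.Nonempty := Finset.card_pos.mp (by omega)
      obtain ⟨q, hq⟩ := hQne
      have hmn : m + 1 ≤ n := by
        have := hQs hq; rw [Finset.mem_Icc] at this; omega
      have hQm : ∀ x ∈ Q, ¬ x ∈ Icc 1 m := by
        intro x hx hx'
        have h1 := hQs hx; rw [Finset.mem_Icc] at h1 hx'; omega
      have hdisj : Disjoint X Q := by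
        rw [Finset.disjoint_left]; intro x hx hx'
        exact hQm x hx' (hXs hx)
      have hinter : (X ∪ Q) ∩ Icc 1 m = X := by
        rw [Finset.union_inter_distrib_right, Finset.inter_eq_left.mpr hXs]
        have : Q ∩ Icc 1 m = ∅ := by
          rw [Finset.eq_empty_iff_forall_notMem]
          intro x hx; rw [Finset.mem_inter] at hx; exact hQm x hx.1 hx.2
        rw [this, Finset.union_empty]
      refine ⟨Finset.mem_filter.mpr ⟨Finset.mem_powersetCard.mpr ⟨?_, ?_⟩, by rw [hinter]; exact hXc⟩, hinter⟩
      · apply Finset.union_subset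
        · exact hXs.trans (Finset.Icc_subset_Icc_right (by omega))
        · exact hQs.trans (Finset.Icc_subset_Icc (by omega) le_rfl)
      · rw [Finset.card_union_of_disjoint hdisj, hXc, hQc]; omega
    calc Nat.choose m i * Nat.choose (n - m) (k - i)
        = ((powersetCard i (Icc 1 m)) ×ˢ (powersetCard (k - i) (Icc (m+1) n))).card := by
          rw [Finset.card_product, card_powersetCard, card_powersetCard, Nat.card_Icc, Nat.card_Icc]
          congr 2 <;> omega
      _ ≤ (P.filter (fun A => (A ∩ Icc 1 m).card = i)).card := by
          apply Finset.card_le_card_of_injOn (fun pq => pq.1 ∪ pq.2)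
          · rintro ⟨X, Q⟩ hpq
            rw [Finset.mem_coe, Finset.mem_product] at hpq
            exact (hkey X Q hpq.1 hpq.2).1
          · rintro ⟨X, Q⟩ h1 ⟨X', Q'⟩ h2 heq
            rw [Finset.mem_coe, Finset.mem_product] at h1 h2
            replace heq : X ∪ Q = X' ∪ Q' := heq
            have e1 : X = X' := by
              rw [← (hkey X Q h1.1 h1.2).2, ← (hkey X' Q' h2.1 h2.2).2, heq]
            have e2 : Q = Q' := by
              have hQm : ∀ (X₀ Q₀ : Finset ℕ), X₀ ⊆ Icc 1 m → Q₀ ⊆ Icc (m+1) n →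
                  (X₀ ∪ Q₀) \ Icc 1 m = Q₀ := by
                intro X₀ Q₀ hX₀ hQ₀
                rw [Finset.union_sdiff_distrib]
                have hx : X₀ \ Icc 1 m = ∅ := by
                  rw [Finset.sdiff_eq_empty_iff_subset]; exact hX₀
                have hq : Q₀ \ Icc 1 m = Q₀ := by
                  rw [Finset.sdiff_eq_self_iff_disjoint, Finset.disjoint_left]
                  intro x hx1 hx2
                  have := hQ₀ hx1; rw [Finset.mem_Icc] at this hx2; omega
                rw [hx, hq, Finset.empty_union]
              have m1 := (Finset.mem_powersetCard.mp h1.1).1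
              have m2 := (Finset.mem_powersetCard.mp h1.2).1
              have m3 := (Finset.mem_powersetCard.mp h2.1).1
              have m4 := (Finset.mem_powersetCard.mp h2.2).1
              rw [← hQm X Q m1 m2, ← hQm X' Q' m3 m4, heq]
            rw [e1, e2]
  have hWsum : ∑ i ∈ Finset.range (s+1),
      Nat.choose m i * Nat.choose (n - m) (k - i) ≤ W.card := by
    calc ∑ i ∈ Finset.range (s+1), Nat.choose m i * Nat.choose (n - m) (k - i)
        ≤ ∑ i ∈ Finset.range (s+1), (P.filter (fun A => (A ∩ Icc 1 m).card = i)).card :=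
          Finset.sum_le_sum hWi
      _ = ((Finset.range (s+1)).biUnion (fun i => P.filter (fun A => (A ∩ Icc 1 m).card = i))).card := by
          rw [Finset.card_biUnion]
          intro i _ j _ hij
          rw [Function.onFun, Finset.disjoint_left]
          intro A hA hA'
          rw [Finset.mem_filter] at hA hA'
          exact hij (hA.2 ▸ hA'.2 ▸ rfl)
      _ ≤ W.card := by
          apply Finset.card_le_card
          intro A hA
          rw [Finset.mem_biUnion] at hA
          obtain ⟨i, hi, hAi⟩ := hA
          rw [Finset.mem_range] at hi
          rw [Finset.mem_filter] at hAi ⊢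
          exact ⟨hAi.1, by omega⟩
  have hUW : U.card + W.card = Nat.choose n k := by
    rw [hUdef, hWdef, Finset.card_filter_add_card_filter_not, hPdef,
      card_powersetCard, Nat.card_Icc]
    simp
  -- Step B: main inequality
  have hmain : F.card + G.card ≤ U.card := by
    set M : Finset ℕ := Icc 1 n ∩ Icc 1 m with hMdef
    have hMn : M ⊆ Icc 1 n := Finset.inter_subset_left
    have hMm : M ⊆ Icc 1 m := Finset.inter_subset_right
    set p := min n m with hpdef
    have hMcard : M.card = p := by
      have hMeq : M = Icc 1 p := by
        ext x
        simp only [hMdef, Finset.mem_inter, Finset.mem_Icc]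
        omega
      rw [hMeq, Nat.card_Icc]
      omega
    have hpn : p ≤ n := min_le_left n m
    have hp2 : 2*s+2 ≤ p := by omega
    have hMle : ∀ x ∈ M, 1 ≤ x ∧ x ≤ p := by
      intro x hx
      rw [hMdef, Finset.mem_inter, Finset.mem_Icc, Finset.mem_Icc] at hx
      omega
    set e := n - p with hedef
    set a := max (s+1) (k - e) with hadef
    set D := (p - a).choose (s+1) with hDdef
    have hDpos : 0 < D := Nat.choose_pos (by omega)
    -- facts about members of G
    have hGm : ∀ B ∈ G, B ⊆ M ∧ B.card = s+1 := by
      intro B hB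
      obtain ⟨h1, h2⟩ := hG B hB
      rw [Finset.mem_powersetCard] at h1
      have heq : B ∩ Icc 1 m = B :=
        Finset.eq_of_subset_of_card_le Finset.inter_subset_left (by omega)
      exact ⟨Finset.subset_inter h1.1 (Finset.inter_eq_left.mp heq), h1.2⟩
    -- facts about members of U
    have hUm : ∀ A ∈ U, A ⊆ Icc 1 n ∧ A.card = k ∧ s+1 ≤ (A ∩ M).card ∧ k ≤ (A ∩ M).card + e := by
      intro A hA
      rw [hUdef, Finset.mem_filter, hPdef, Finset.mem_powersetCard] at hA
      obtain ⟨⟨hAs, hAc⟩, hAm⟩ := hA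
      have hAM : A ∩ M = A ∩ Icc 1 m := by
        rw [hMdef, ← Finset.inter_assoc, Finset.inter_eq_left.mpr hAs]
      have h3 : (A \ M).card ≤ e := by
        calc (A \ M).card ≤ (Icc 1 n \ M).card :=
              Finset.card_le_card (Finset.sdiff_subset_sdiff hAs Finset.Subset.rfl)
          _ = e := by rw [Finset.card_sdiff_of_subset hMn, Nat.card_Icc, hMcard]; omega
      have h4 : (A ∩ M).card + (A \ M).card = A.card := Finset.card_inter_add_card_sdiff A M
      have h5 : (A ∩ M).card = (A ∩ Icc 1 m).card := by rw [hAM]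
      exact ⟨hAs, hAc, by omega, by omega⟩
    set t : {x // x ∈ G} → Finset (Finset ℕ) :=
      fun B => U.filter (fun A => A ∩ (B : Finset ℕ) = ∅) with htdef
    -- lower bound for degrees of B's
    have hdeg : ∀ B ∈ G, D ≤ (U.filter (fun A => A ∩ B = ∅)).card := by
      intro B hB
      obtain ⟨hBM, hBc⟩ := hGm B hB
      have hMBcard : (M \ B).card = p - (s+1) := by
        rw [Finset.card_sdiff_of_subset hBM, hMcard, hBc]
      by_cases hc : k ≤ e + (s+1)
      · -- case 1 : a = s+1, fill outside M
        set Q := Icc (p+1) (p + (k - (s+1))) with hQdef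
        have hQcard : Q.card = k - (s+1) := by rw [hQdef, Nat.card_Icc]; omega
        have hQup : ∀ x ∈ Q, p + 1 ≤ x ∧ x ≤ n := by
          intro x hx; rw [hQdef, Finset.mem_Icc] at hx; omega
        have hkey2 : ∀ T ∈ powersetCard (s+1) (M \ B),
            (T ∪ Q) ∈ U.filter (fun A => A ∩ B = ∅) ∧ (T ∪ Q) ∩ M = T := by
          intro T hT
          rw [Finset.mem_powersetCard] at hT
          obtain ⟨hTs, hTc⟩ := hT
          have hTM : T ⊆ M := hTs.trans Finset.sdiff_subset
          have hdisj : Disjoint T Q := by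
            rw [Finset.disjoint_left]; intro x hx hx'
            have := hMle x (hTM hx); have := hQup x hx'; omega
          have hQM : Q ∩ M = ∅ := by
            rw [Finset.eq_empty_iff_forall_notMem]
            intro x hx; rw [Finset.mem_inter] at hx
            have := hQup x hx.1; have := hMle x hx.2; omega
          have hinterM : (T ∪ Q) ∩ M = T := by
            rw [Finset.union_inter_distrib_right, Finset.inter_eq_left.mpr hTM, hQM,
              Finset.union_empty]
          have hmem : (T ∪ Q) ∈ U := by
            rw [hUdef, Finset.mem_filter, hPdef, Finset.mem_powersetCard]
            refine ⟨⟨?_, ?_⟩, ?_⟩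
            · apply Finset.union_subset (hTM.trans hMn)
              intro x hx; rw [Finset.mem_Icc]; have := hQup x hx; omega
            · rw [Finset.card_union_of_disjoint hdisj, hTc, hQcard]; omega
            · calc s+1 = T.card := hTc.symm
                _ ≤ ((T ∪ Q) ∩ Icc 1 m).card := by
                    apply Finset.card_le_card
                    intro x hx
                    exact Finset.mem_inter.mpr ⟨Finset.mem_union_left _ hx, hMm (hTM hx)⟩
          refine ⟨Finset.mem_filter.mpr ⟨hmem, ?_⟩, hinterM⟩
          rw [Finset.eq_empty_iff_forall_notMem]
          intro x hx
          rw [Finset.mem_inter, Finset.mem_union] at hx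
          obtain ⟨hx1 | hx2, hxB⟩ := hx
          · exact (Finset.mem_sdiff.mp (hTs hx1)).2 hxB
          · have := hQup x hx2; have := hMle x (hBM hxB); omega
        calc D = (M \ B).card.choose (s+1) := by
              rw [hDdef, hMBcard]; congr 1; omega
          _ = (powersetCard (s+1) (M \ B)).card := (card_powersetCard _ _).symm
          _ ≤ (U.filter (fun A => A ∩ B = ∅)).card := by
              apply Finset.card_le_card_of_injOn (fun T => T ∪ Q)
              · intro T hT; exact (hkey2 T hT).1
              · intro T h1 T' h2 heq
                replace heq : T ∪ Q = T' ∪ Q := heq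
                rw [← (hkey2 T h1).2, ← (hkey2 T' h2).2, heq]
      · -- case 2 : a = k - e, carve out of [n]
        set t' := n - k with ht'def
        have hts : s+1 ≤ t' := by omega
        have hpt : t' + s + 2 ≤ p := by omega
        have hkey3 : ∀ Y ∈ powersetCard (t'-s-1) (M \ B),
            (Icc 1 n \ (B ∪ Y)) ∈ U.filter (fun A => A ∩ B = ∅)
              ∧ (M \ B) \ (Icc 1 n \ (B ∪ Y)) = Y := by
          intro Y hY
          rw [Finset.mem_powersetCard] at hY
          obtain ⟨hYs, hYc⟩ := hY
          have hYM : Y ⊆ M := hYs.trans Finset.sdiff_subset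
          have hdisj : Disjoint B Y := by
            rw [Finset.disjoint_right]; intro x hx
            exact (Finset.mem_sdiff.mp (hYs hx)).2
          have hBYM : B ∪ Y ⊆ M := Finset.union_subset hBM hYM
          have hBYc : (B ∪ Y).card = t' := by
            rw [Finset.card_union_of_disjoint hdisj, hBc, hYc]; omega
          have hAc : (Icc 1 n \ (B ∪ Y)).card = k := by
            rw [Finset.card_sdiff_of_subset (hBYM.trans hMn), Nat.card_Icc, hBYc]; omega
          have hmem : (Icc 1 n \ (B ∪ Y)) ∈ U := by
            rw [hUdef, Finset.mem_filter, hPdef, Finset.mem_powersetCard]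
            refine ⟨⟨Finset.sdiff_subset, hAc⟩, ?_⟩
            have hsub : M \ (B ∪ Y) ⊆ (Icc 1 n \ (B ∪ Y)) ∩ Icc 1 m := by
              intro x hx
              rw [Finset.mem_sdiff] at hx
              exact Finset.mem_inter.mpr
                ⟨Finset.mem_sdiff.mpr ⟨hMn hx.1, hx.2⟩, hMm hx.1⟩
            calc s+1 ≤ (M \ (B ∪ Y)).card := by
                  rw [Finset.card_sdiff_of_subset hBYM, hMcard, hBYc]; omega
              _ ≤ _ := Finset.card_le_card hsub
          have hrec : (M \ B) \ (Icc 1 n \ (B ∪ Y)) = Y := by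
            ext x
            rw [Finset.mem_sdiff, Finset.mem_sdiff, Finset.mem_sdiff, Finset.mem_union]
            constructor
            · rintro ⟨⟨hxM, hxB⟩, hxA⟩
              by_contra hxY
              exact hxA ⟨hMn hxM, fun h => h.elim hxB hxY⟩
            · intro hxY
              have hx' := Finset.mem_sdiff.mp (hYs hxY)
              exact ⟨⟨hx'.1, hx'.2⟩, fun h => h.2 (Or.inr hxY)⟩
          refine ⟨Finset.mem_filter.mpr ⟨hmem, ?_⟩, hrec⟩
          rw [Finset.eq_empty_iff_forall_notMem]
          intro x hx
          rw [Finset.mem_inter, Finset.mem_sdiff, Finset.mem_union] at hx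
          exact hx.1.2 (Or.inl hx.2)
        calc D = (n-k).choose (s+1) := by rw [hDdef]; congr 1; omega
          _ ≤ (t'+1).choose (s+2) := by
              rw [Nat.choose_succ_succ]
              exact Nat.le_add_right _ _
          _ = (t'+1).choose (t'-s-1) := by
              rw [show t'-s-1 = (t'+1)-(s+2) by omega, Nat.choose_symm (by omega)]
          _ ≤ (p-(s+1)).choose (t'-s-1) := Nat.choose_le_choose _ (by omega)
          _ = (powersetCard (t'-s-1) (M \ B)).card := by
              rw [card_powersetCard, hMBcard]
          _ ≤ (U.filter (fun A => A ∩ B = ∅)).card := by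
              apply Finset.card_le_card_of_injOn (fun Y => Icc 1 n \ (B ∪ Y))
              · intro Y hY; exact (hkey3 Y hY).1
              · intro Y h1 Y' h2 heq
                replace heq : Icc 1 n \ (B ∪ Y) = Icc 1 n \ (B ∪ Y') := heq
                rw [← (hkey3 Y h1).2, ← (hkey3 Y' h2).2, heq]
    -- upper bound for degrees of A's
    have hcodeg : ∀ A ∈ U, ∀ (S : Finset {x // x ∈ G}),
        (S.filter (fun B : {x // x ∈ G} => A ∩ (B : Finset ℕ) = ∅)).card ≤ D := by
      intro A hA S
      obtain ⟨hAs, hAc, hAM, hAe⟩ := hUm A hA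
      calc (S.filter (fun B : {x // x ∈ G} => A ∩ (B : Finset ℕ) = ∅)).card
          ≤ (powersetCard (s+1) (M \ A)).card := by
            apply Finset.card_le_card_of_injOn (fun B : {x // x ∈ G} => (B : Finset ℕ))
            · intro B hB
              rw [Finset.mem_coe, Finset.mem_filter] at hB
              obtain ⟨hBM, hBc⟩ := hGm (B : Finset ℕ) B.prop
              rw [Finset.mem_coe, Finset.mem_powersetCard]
              refine ⟨?_, hBc⟩
              intro x hx
              rw [Finset.mem_sdiff]
              refine ⟨hBM hx, fun hxA => ?_⟩
              have hmem : x ∈ A ∩ (B : Finset ℕ) := Finset.mem_inter.mpr ⟨hxA, hx⟩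
              rw [hB.2] at hmem
              exact Finset.notMem_empty x hmem
            · exact Subtype.coe_injective.injOn
        _ = (M \ A).card.choose (s+1) := card_powersetCard _ _
        _ ≤ D := by
            rw [hDdef]
            apply Nat.choose_le_choose
            have h5 : (M \ A).card + (M ∩ A).card = M.card :=
              Finset.card_sdiff_add_card_inter M A
            have h6 : (M ∩ A).card = (A ∩ M).card := by rw [Finset.inter_comm]
            omega
    -- Hall's theorem
    have hall : ∃ f : {x // x ∈ G} → Finset ℕ, Function.Injective f ∧ ∀ B, f B ∈ t B := by
      rw [← Finset.all_card_le_biUnion_card_iff_exists_injective]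
      intro S
      set V := S.biUnion t with hVdef
      have hVU : V ⊆ U := by
        intro A hA
        rw [hVdef, Finset.mem_biUnion] at hA
        obtain ⟨B, _, hmem⟩ := hA
        exact (Finset.mem_filter.mp hmem).1
      have h2 : ∀ B ∈ S, t B = V.filter (fun A => A ∩ (B : Finset ℕ) = ∅) := by
        intro B hB
        ext A
        constructor
        · intro hAt
          exact Finset.mem_filter.mpr
            ⟨Finset.mem_biUnion.mpr ⟨B, hB, hAt⟩, (Finset.mem_filter.mp hAt).2⟩
        · intro hAf
          rw [Finset.mem_filter] at hAf
          exact Finset.mem_filter.mpr ⟨hVU hAf.1, hAf.2⟩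
      have h1 : D * S.card ≤ ∑ B ∈ S, (t B).card := by
        calc D * S.card = ∑ _B ∈ S, D := by rw [Finset.sum_const, smul_eq_mul, mul_comm]
          _ ≤ ∑ B ∈ S, (t B).card := Finset.sum_le_sum (fun B _ => hdeg (B : Finset ℕ) B.2)
      have h3 : ∑ B ∈ S, (t B).card
          = ∑ A ∈ V, (S.filter (fun B : {x // x ∈ G} => A ∩ (B : Finset ℕ) = ∅)).card := by
        calc ∑ B ∈ S, (t B).card
            = ∑ B ∈ S, ∑ A ∈ V, (if A ∩ (B : Finset ℕ) = ∅ then 1 else 0) := by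
              apply Finset.sum_congr rfl
              intro B hB
              rw [h2 B hB, Finset.card_filter]
          _ = ∑ A ∈ V, ∑ B ∈ S, (if A ∩ (B : Finset ℕ) = ∅ then 1 else 0) := Finset.sum_comm
          _ = ∑ A ∈ V, (S.filter (fun B : {x // x ∈ G} => A ∩ (B : Finset ℕ) = ∅)).card := by
              apply Finset.sum_congr rfl
              intro A _
              rw [Finset.card_filter]
      have h4 : ∑ A ∈ V, (S.filter (fun B : {x // x ∈ G} => A ∩ (B : Finset ℕ) = ∅)).card ≤ V.card * D := by
        calc ∑ A ∈ V, (S.filter (fun B : {x // x ∈ G} => A ∩ (B : Finset ℕ) = ∅)).card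
            ≤ ∑ A ∈ V, D := Finset.sum_le_sum (fun A hA => hcodeg A (hVU hA) S)
          _ = V.card * D := by rw [Finset.sum_const, smul_eq_mul]
      have h5 : S.card * D ≤ V.card * D := by
        calc S.card * D = D * S.card := mul_comm _ _
          _ ≤ ∑ B ∈ S, (t B).card := h1
          _ = _ := h3
          _ ≤ V.card * D := h4
      exact Nat.le_of_mul_le_mul_right h5 hDpos
    obtain ⟨f, hfinj, hfmem⟩ := hall
    have hFU : F ⊆ U := by
      intro A hA
      rw [hUdef, Finset.mem_filter]
      exact ⟨(hF A hA).1, (hF A hA).2⟩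
    have himg : Finset.image f Finset.univ ⊆ U \ F := by
      intro A hA
      rw [Finset.mem_image] at hA
      obtain ⟨B, _, rfl⟩ := hA
      have h5 := hfmem B
      rw [htdef, Finset.mem_filter] at h5
      rw [Finset.mem_sdiff]
      refine ⟨h5.1, fun hFA => ?_⟩
      obtain ⟨x, hx⟩ := hcross (f B) hFA (B : Finset ℕ) B.2
      rw [h5.2] at hx
      exact Finset.notMem_empty x hx
    have hGcard : G.card ≤ (U \ F).card := by
      calc G.card = (Finset.univ : Finset {x // x ∈ G}).card := by
            rw [Finset.card_univ, Fintype.card_coe]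
        _ = (Finset.image f Finset.univ).card := (Finset.card_image_of_injective _ hfinj).symm
        _ ≤ (U \ F).card := Finset.card_le_card himg
    have hsd := Finset.card_sdiff_of_subset hFU
    have hle := Finset.card_le_card hFU
    omega
  omega
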